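/- Let ∂_A : A₁ → A₀ and ∂_B : B₁ → B₀ be continuous homomorphisms of topological abelian groups. Suppose given continuous group homomorphisms E₀ : A₀ → B₀, E₁ : A₁ → B₁, P₀ : B₀ → A₀, P₁ : B₁ → A₁ with E₀ ∘ ∂_A = ∂_B ∘ E₁ and P₀ ∘ ∂_B = ∂_A ∘ P₁, together with continuous group homomorphisms η : A₀ → A₁ and h : B₀ → B₁ satisfying ∂_A(η(x)) = x − P₀(E₀(x)) for all x ∈ A₀ and ∂_B(h(y)) = y − E₀(P₀(y)) for all y ∈ B₀. If U ⊆ A₀ is open and dense, then the set { ∂_B(ψ) + E₀(x) : ψ ∈ B₁, x ∈ U } is open and dense in B₀. -/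

import Mathlib

/-- Given continuous homomorphisms `∂_A : A₁ → A₀`, `∂_B : B₁ → B₀` of
topological abelian groups, continuous group homomorphisms `E₀, E₁, P₀, P₁` intertwining the
boundary maps (`E₀ ∘ ∂_A = ∂_B ∘ E₁`, `P₀ ∘ ∂_B = ∂_A ∘ P₁`), and continuous group
homomorphisms `η : A₀ → A₁`, `h : B₀ → B₁` with `∂_A (η x) = x − P₀ (E₀ x)` and
`∂_B (h y) = y − E₀ (P₀ y)` (an equivalence of topological abelian 2-groups): if `U ⊆ A₀` is
open and dense, then the set `{ ∂_B ψ + E₀ x : ψ ∈ B₁, x ∈ U }` of all objects of `B₀`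
isomorphic to objects in `E₀(U)` is open and dense in `B₀`. -/
theorem equivalence_preserves_open_dense_up_to_isomorphism
    {A₁ A₀ B₁ B₀ : Type*}
    [AddCommGroup A₁] [TopologicalSpace A₁] [IsTopologicalAddGroup A₁]
    [AddCommGroup A₀] [TopologicalSpace A₀] [IsTopologicalAddGroup A₀]
    [AddCommGroup B₁] [TopologicalSpace B₁] [IsTopologicalAddGroup B₁]
    [AddCommGroup B₀] [TopologicalSpace B₀] [IsTopologicalAddGroup B₀]
    (bdA : A₁ →+ A₀) (hbdA : Continuous bdA)
    (bdB : B₁ →+ B₀) (hbdB : Continuous bdB)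
    (E₀ : A₀ →+ B₀) (hE₀ : Continuous E₀)
    (E₁ : A₁ →+ B₁) (hE₁ : Continuous E₁)
    (P₀ : B₀ →+ A₀) (hP₀ : Continuous P₀)
    (P₁ : B₁ →+ A₁) (hP₁ : Continuous P₁)
    (hE_comm : ∀ ψ : A₁, E₀ (bdA ψ) = bdB (E₁ ψ))
    (hP_comm : ∀ φ : B₁, P₀ (bdB φ) = bdA (P₁ φ))
    (η : A₀ →+ A₁) (hη : Continuous η)
    (hη_eq : ∀ x : A₀, bdA (η x) = x - P₀ (E₀ x))
    (h : B₀ →+ B₁) (hh : Continuous h)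
    (hh_eq : ∀ y : B₀, bdB (h y) = y - E₀ (P₀ y))
    (U : Set A₀) (hU_open : IsOpen U) (hU_dense : Dense U) :
    IsOpen {z : B₀ | ∃ ψ : B₁, ∃ x ∈ U, z = bdB ψ + E₀ x} ∧
      Dense {z : B₀ | ∃ ψ : B₁, ∃ x ∈ U, z = bdB ψ + E₀ x} := by
  set S : Set B₀ := {z : B₀ | ∃ ψ : B₁, ∃ x ∈ U, z = bdB ψ + E₀ x} with hS
  have hSpre : S = P₀ ⁻¹' (⋃ φ : A₁, (fun x => bdA φ + x) '' U) := by
    ext z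
    simp only [hS, Set.mem_setOf_eq, Set.mem_preimage, Set.mem_iUnion, Set.mem_image]
    constructor
    · rintro ⟨ψ, x, hx, rfl⟩
      refine ⟨P₁ ψ - η x, x, hx, ?_⟩
      have h1 := hη_eq x
      simp only [map_add, map_sub, hP_comm ψ]
      have : bdA (η x) = x - P₀ (E₀ x) := h1
      -- bdA (P₁ ψ) - bdA (η x) + x = bdA (P₁ ψ) + P₀ (E₀ x)
      rw [this]; abel
    · rintro ⟨φ, x, hx, hφ⟩
      refine ⟨h z + E₁ φ, x, hx, ?_⟩
      have h2 := hh_eq z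
      rw [map_add, h2, ← hE_comm φ]
      have : E₀ (P₀ z) = E₀ (bdA φ) + E₀ x := by rw [← map_add, ← hφ]
      rw [this]; abel
  have hVopen : IsOpen (⋃ φ : A₁, (fun x => bdA φ + x) '' U) :=
    isOpen_iUnion fun φ => (isOpenMap_add_left (bdA φ)) U hU_open
  constructor
  · rw [hSpre]
    exact hVopen.preimage hP₀
  · rw [dense_iff_inter_open]
    rintro W hW ⟨z, hz⟩
    set g : A₀ → B₀ := fun x => bdB (h z) + E₀ x with hg
    have hgcont : Continuous g := continuous_const.add hE₀
    have hgz : g (P₀ z) = z := by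
      simp only [hg, hh_eq z]; abel
    have : P₀ z ∈ g ⁻¹' W := by simp [Set.mem_preimage, hgz, hz]
    obtain ⟨x, hxW, hxU⟩ := hU_dense.inter_open_nonempty _ (hW.preimage hgcont) ⟨_, this⟩
    exact ⟨g x, hxW, h z, x, hxU, rfl⟩
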